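/- Let Δx > 0 and let p be the unique quintic polynomial such that for ℓ ∈ {-1, 0, 1}, (1/Δx)∫_{x_{i+ℓ}-Δx/2}^{x_{i+ℓ}+Δx/2} p = f_{i+ℓ} and (1/Δx)∫_{x_{i+ℓ}-Δx/2}^{x_{i+ℓ}+Δx/2} p' = h_{i+ℓ}, where x_{i+ℓ} = x_i + ℓΔx. Then p(x_i + Δx/2) = (11/60) f_{i-1} + (19/30) f_i + (11/60) f_{i+1} + (Δx/20)(h_{i-1} + 10 h_i − h_{i+1}). -/
import Mathlib
set_option maxHeartbeats 2000000


open intervalIntegral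

theorem stmt_2 (Δx xi fim1 fi fip1 him1 hi hip1 : ℝ) (hΔ : 0 < Δx)
    (p : Polynomial ℝ) (hdeg : p.natDegree ≤ 5)
    (hf1 : (1 / Δx) * ∫ x in ((xi - Δx) - Δx / 2)..((xi - Δx) + Δx / 2), p.eval x = fim1)
    (hf2 : (1 / Δx) * ∫ x in (xi - Δx / 2)..(xi + Δx / 2), p.eval x = fi)
    (hf3 : (1 / Δx) * ∫ x in ((xi + Δx) - Δx / 2)..((xi + Δx) + Δx / 2), p.eval x = fip1)
    (hh1 : (1 / Δx) * ∫ x in ((xi - Δx) - Δx / 2)..((xi - Δx) + Δx / 2),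
        (Polynomial.derivative p).eval x = him1)
    (hh2 : (1 / Δx) * ∫ x in (xi - Δx / 2)..(xi + Δx / 2),
        (Polynomial.derivative p).eval x = hi)
    (hh3 : (1 / Δx) * ∫ x in ((xi + Δx) - Δx / 2)..((xi + Δx) + Δx / 2),
        (Polynomial.derivative p).eval x = hip1) :
    p.eval (xi + Δx / 2) =
      (11 / 60) * fim1 + (19 / 30) * fi + (11 / 60) * fip1
        + (Δx / 20) * (him1 + 10 * hi - hip1) := by
  have hd : p.natDegree < 6 := lt_of_le_of_lt hdeg (by norm_num)
  have heval : ∀ x : ℝ, p.eval x = ∑ k ∈ Finset.range 6, p.coeff k * x ^ k := by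
    intro x; exact p.eval_eq_sum_range' hd x
  have hint : ∀ a b : ℝ, (∫ x in a..b, p.eval x)
      = ∑ k ∈ Finset.range 6, p.coeff k * ((b ^ (k+1) - a ^ (k+1)) / (k+1)) := by
    intro a b
    simp_rw [heval]
    rw [intervalIntegral.integral_finset_sum]
    · refine Finset.sum_congr rfl fun k _ => ?_
      rw [intervalIntegral.integral_const_mul, integral_pow]
    · intro k _
      exact (continuous_const.mul (continuous_pow k)).intervalIntegrable a b
  have hder : ∀ a b : ℝ, (∫ x in a..b, (Polynomial.derivative p).eval x)
      = p.eval b - p.eval a := by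
    intro a b
    refine intervalIntegral.integral_eq_sub_of_hasDerivAt (fun x _ => p.hasDerivAt x) ?_
    exact (Polynomial.continuous _).intervalIntegrable a b
  rw [hint] at hf1 hf2 hf3
  rw [hder] at hh1 hh2 hh3
  simp_rw [heval] at hf1 hf2 hf3 hh1 hh2 hh3 ⊢
  simp only [Finset.sum_range_succ, Finset.sum_range_zero] at hf1 hf2 hf3 hh1 hh2 hh3 ⊢
  subst hf1 hf2 hf3 hh1 hh2 hh3
  have hne : Δx ≠ 0 := hΔ.ne'
  field_simp
  ring
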